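/- Let A(t) = t(t - t_A) and B(t) = (t - t_B)(t - 1) with 0 < t_B < t_A < 1, and define P(t) = 4(B(t)A'(t) - B'(t)A(t)) - B(t)^3. Then P(t) < 0 for all t in (0, t_B) ∪ (t_A, 1). -/
import Mathlib


theorem stmt_1 (tA tB : ℝ) (h1 : 0 < tB) (h2 : tB < tA) (h3 : tA < 1)
    (A B P : ℝ → ℝ)
    (hA : ∀ t, A t = t * (t - tA)) (hB : ∀ t, B t = (t - tB) * (t - 1))
    (hP : ∀ t, P t = 4 * (B t * deriv A t - deriv B t * A t) - (B t) ^ 3) :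
    ∀ t ∈ Set.Ioo (0 : ℝ) tB ∪ Set.Ioo tA 1, P t < 0 := by
  have hAfun : A = fun t => t * (t - tA) := funext hA
  have hBfun : B = fun t => (t - tB) * (t - 1) := funext hB
  intro t ht
  have hdA : deriv A t = (t - tA) + t := by
    rw [hAfun]
    have h : HasDerivAt (fun t : ℝ => t * (t - tA)) (1 * (t - tA) + t * 1) t :=
      (hasDerivAt_id t).mul ((hasDerivAt_id t).sub_const tA)
    rw [h.deriv]; ring
  have hdB : deriv B t = (t - 1) + (t - tB) := by
    rw [hBfun]
    have h : HasDerivAt (fun t : ℝ => (t - tB) * (t - 1)) (1 * (t - 1) + (t - tB) * 1) t :=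
      ((hasDerivAt_id t).sub_const tB).mul ((hasDerivAt_id t).sub_const 1)
    rw [h.deriv]; ring
  rw [hP, hA, hB, hdA, hdB]
  have hz : 0 < tA - tB := sub_pos.2 h2
  rcases ht with ⟨ht0, htB⟩ | ⟨htA, ht1⟩
  · -- Case 0 < t < tB : W < 0 and B > 0, so P = 4W - B³ < 0
    have hs : 0 < 1 + tB - tA := by linarith
    have hWneg : (tA - tB - 1) * t ^ 2 + 2 * tB * t - tA * tB < 0 := by
      nlinarith [sq_nonneg ((1 + tB - tA) * t - tB),
        mul_pos h1 (mul_pos hz (sub_pos.2 h3))]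
    have hBpos : 0 < (t - tB) * (t - 1) :=
      mul_pos_of_neg_of_neg (by linarith) (by linarith)
    nlinarith [pow_pos hBpos 3, hWneg]
  · -- Case tA < t < 1
    have px : 0 < t - tA := sub_pos.2 htA
    have py : 0 < 1 - t := sub_pos.2 ht1
    have hb : 0 < (t - tB) * (1 - t) := mul_pos (by linarith) py
    have hb4 : (t - tB) * (1 - t) ≤ 1 / 4 := by
      nlinarith [sq_nonneg ((t - tB) - (1 - t)), sq_nonneg tB]
    have hG : 0 < 16 * ((1 + tB - tA) * t ^ 2 - 2 * tB * t + tA * tB)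
        - ((t - tB) * (1 - t)) ^ 2 := by
      have hid : 16 * ((1 + tB - tA) * t ^ 2 - 2 * tB * t + tA * tB)
          - ((t - tB) * (1 - t)) ^ 2 =
          16 * (1 - t) * (tA - tB) * tB^2 +
          32 * (1 - t) * (tA - tB)^2 * tB +
          16 * (1 - t) * (tA - tB)^3 +
          16 * (1 - t)^2 * (tA - tB) * tB +
          15 * (1 - t)^2 * (tA - tB)^2 +
          16 * (t - tA) * (tA - tB) * tB^2 +
          32 * (t - tA) * (tA - tB)^2 * tB +
          16 * (t - tA) * (tA - tB)^3 +
          64 * (t - tA) * (1 - t) * (tA - tB) * tB +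
          64 * (t - tA) * (1 - t) * (tA - tB)^2 +
          30 * (t - tA) * (1 - t)^2 * (tA - tB) +
          16 * (t - tA)^2 * tB^2 +
          64 * (t - tA)^2 * (tA - tB) * tB +
          48 * (t - tA)^2 * (tA - tB)^2 +
          32 * (t - tA)^2 * (1 - t) * tB +
          80 * (t - tA)^2 * (1 - t) * (tA - tB) +
          15 * (t - tA)^2 * (1 - t)^2 +
          32 * (t - tA)^3 * tB +
          48 * (t - tA)^3 * (tA - tB) +
          32 * (t - tA)^3 * (1 - t) +
          16 * (t - tA)^4 := by ring
      rw [hid]; positivity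
    nlinarith [hG, hb, hb4, sq_nonneg ((t - tB) * (1 - t)), mul_pos hb hb]
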